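/- Let n ≥ 3 be an integer, m ∈ ℝ with m ≠ 0, set f(r) := r² − 2m r^{2−n}, and let I ⊆ (0,∞) be a nonempty open interval on which f > 0. A smooth function V : I × ℝ^{n−1} → ℝ, written V = V(r,x), satisfies the system (i) ∂²V/∂r² + ( f'/(2f) ) ∂V/∂r − ( f''/(2f) ) V = 0, (ii) ∂²V/∂r∂x^A − (1/r) ∂V/∂x^A = 0 for all A, (iii) ∂²V/∂x^A∂x^B + δ_{AB} · r ( f ∂V/∂r − (f'/2) V ) = 0 for all A, B, if and only if there is a constant c̃ ∈ ℝ such that V(r,x) = c̃ √(f(r)) for all (r,x). -/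

import Mathlib

open Filter Topology Set

/-- Directional (partial) derivative of a real-valued function along a vector `v`. -/
noncomputable def pd {E : Type*} [AddCommGroup E] [Module ℝ E] [TopologicalSpace E]
    (f : E → ℝ) (v : E) (x : E) : ℝ :=
  lineDeriv ℝ f x v

/-- The radial coordinate direction in `ℝ × ℝ^{n-1}`. -/
def dirR (d : ℕ) : ℝ × (Fin d → ℝ) := (1, 0)

/-- The `A`-th boundary coordinate direction in `ℝ × ℝ^{n-1}`. -/
def dirX (d : ℕ) (A : Fin d) : ℝ × (Fin d → ℝ) := (0, Pi.single A 1)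

/-- The radial function `f(r) = r² − 2m r^{2−n}`. -/
noncomputable def fBK (n : ℕ) (m : ℝ) (r : ℝ) : ℝ :=
  r ^ 2 - 2 * m * r ^ ((2 : ℝ) - n)

/-! ### auxiliary lemmas -/

noncomputable def fBK1 (n : ℕ) (m : ℝ) (r : ℝ) : ℝ :=
  2 * r - 2 * m * ((2 : ℝ) - n) * r ^ ((1 : ℝ) - n)

noncomputable def fBK2 (n : ℕ) (m : ℝ) (r : ℝ) : ℝ :=
  2 - 2 * m * ((2 : ℝ) - n) * ((1 : ℝ) - n) * r ^ (-(n : ℝ))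

lemma hasDerivAt_fBK (n : ℕ) (m : ℝ) {r : ℝ} (hr : r ≠ 0) :
    HasDerivAt (fBK n m) (fBK1 n m r) r := by
  have h1 : HasDerivAt (fun s : ℝ => s ^ 2) (2 * r) r := by
    simpa using hasDerivAt_pow 2 r
  have h2 : HasDerivAt (fun s : ℝ => s ^ ((2 : ℝ) - n))
      (((2 : ℝ) - n) * r ^ ((2 : ℝ) - n - 1)) r := Real.hasDerivAt_rpow_const (Or.inl hr)
  have h3 := h1.sub ((h2.const_mul (2 * m)))
  have he : (2 : ℝ) - n - 1 = (1 : ℝ) - n := by ring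
  rw [he] at h3
  refine h3.congr_deriv ?_
  unfold fBK1; ring

lemma deriv_fBK (n : ℕ) (m : ℝ) {r : ℝ} (hr : 0 < r) :
    deriv (fBK n m) r = fBK1 n m r := (hasDerivAt_fBK n m hr.ne').deriv

lemma hasDerivAt_fBK1 (n : ℕ) (m : ℝ) {r : ℝ} (hr : r ≠ 0) :
    HasDerivAt (fBK1 n m) (fBK2 n m r) r := by
  have h1 : HasDerivAt (fun s : ℝ => 2 * s) 2 r := by
    simpa using (hasDerivAt_id r).const_mul (2 : ℝ)
  have h2 : HasDerivAt (fun s : ℝ => s ^ ((1 : ℝ) - n))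
      (((1 : ℝ) - n) * r ^ ((1 : ℝ) - n - 1)) r := Real.hasDerivAt_rpow_const (Or.inl hr)
  have h3 := h1.sub (h2.const_mul (2 * m * ((2 : ℝ) - n)))
  have he : (1 : ℝ) - n - 1 = -(n : ℝ) := by ring
  rw [he] at h3
  refine h3.congr_deriv ?_
  unfold fBK2; ring

lemma deriv_deriv_fBK (n : ℕ) (m : ℝ) {r : ℝ} (hr : 0 < r) :
    deriv (deriv (fBK n m)) r = fBK2 n m r := by
  have hev : deriv (fBK n m) =ᶠ[𝓝 r] fBK1 n m := by
    filter_upwards [Ioi_mem_nhds hr] with s hs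
    exact deriv_fBK n m hs
  rw [hev.deriv_eq]
  exact (hasDerivAt_fBK1 n m hr.ne').deriv

lemma key_nonzero (n : ℕ) (hn : 3 ≤ n) (m : ℝ) (hm : m ≠ 0) {r : ℝ} (hr : 0 < r) :
    fBK1 n m r - r * fBK2 n m r ≠ 0 := by
  have hrn : r ^ ((1 : ℝ) - n) = r * r ^ (-(n : ℝ)) := by
    rw [show (1 : ℝ) - n = 1 + -(n : ℝ) by ring, Real.rpow_add hr, Real.rpow_one]
  have hval : fBK1 n m r - r * fBK2 n m r = 2 * m * n * ((n : ℝ) - 2) * r ^ ((1 : ℝ) - n) := by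
    unfold fBK1 fBK2
    rw [hrn]; ring
  rw [hval]
  have h3 : (3 : ℝ) ≤ (n : ℝ) := by exact_mod_cast hn
  have hrp : r ^ ((1 : ℝ) - n) ≠ 0 := (Real.rpow_pos_of_pos hr _).ne'
  apply mul_ne_zero _ hrp
  exact mul_ne_zero (mul_ne_zero (mul_ne_zero two_ne_zero hm) (by linarith)) (by linarith)

/-! ### slice representations of `pd` -/

lemma pd_fst {d : ℕ} (F : ℝ × (Fin d → ℝ) → ℝ) (r : ℝ) (x : Fin d → ℝ) :
    pd F (dirR d) (r, x) = deriv (fun s => F (s, x)) r := by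
  have h : (fun t : ℝ => F ((r, x) + t • dirR d)) = fun t => (fun s => F (s, x)) (r + t) := by
    funext t
    simp [dirR, Prod.smul_mk]
  rw [pd, lineDeriv, h, deriv_comp_const_add (fun s => F (s, x)) r 0, add_zero]

lemma pd_snd {d : ℕ} (F : ℝ × (Fin d → ℝ) → ℝ) (r : ℝ) (x : Fin d → ℝ) (A : Fin d) :
    pd F (dirX d A) (r, x)
      = deriv (fun t : ℝ => F (r, x + t • (Pi.single A 1 : Fin d → ℝ))) 0 := by
  have h : (fun t : ℝ => F ((r, x) + t • dirX d A))
      = fun t : ℝ => F (r, x + t • (Pi.single A 1 : Fin d → ℝ)) := by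
    funext t
    simp [dirX, Prod.smul_mk]
  rw [pd, lineDeriv, h]

/-! ### calculus machinery on an open set -/

section machinery
variable {E : Type*} [NormedAddCommGroup E] [NormedSpace ℝ E]
  {U : Set E} {V : E → ℝ} {q : E}

lemma smooth3 (hV : ContDiffOn ℝ (⊤ : ℕ∞) V U) : ContDiffOn ℝ 3 V U :=
  hV.of_le (by norm_cast)

lemma pd_eq_fderiv (hU : IsOpen U) (hV : ContDiffOn ℝ (⊤ : ℕ∞) V U) (hq : q ∈ U) (v : E) :
    pd V v q = fderiv ℝ V q v :=
  DifferentiableAt.lineDeriv_eq_fderiv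
    ((((smooth3 hV).contDiffAt (hU.mem_nhds hq))).differentiableAt (by norm_num))

lemma contDiffOn_fderiv (hU : IsOpen U) (hV : ContDiffOn ℝ (⊤ : ℕ∞) V U) :
    ContDiffOn ℝ 2 (fderiv ℝ V) U :=
  (smooth3 hV).fderiv_of_isOpen hU (by norm_num)

lemma contDiffOn_fderiv2 (hU : IsOpen U) (hV : ContDiffOn ℝ (⊤ : ℕ∞) V U) :
    ContDiffOn ℝ 1 (fderiv ℝ (fderiv ℝ V)) U :=
  (contDiffOn_fderiv hU hV).fderiv_of_isOpen hU (by norm_num)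

lemma diffAt_fderiv_apply (hU : IsOpen U) (hV : ContDiffOn ℝ (⊤ : ℕ∞) V U) (hq : q ∈ U) (v : E) :
    DifferentiableAt ℝ (fun q' => fderiv ℝ V q' v) q :=
  (((contDiffOn_fderiv hU hV).contDiffAt (hU.mem_nhds hq)).clm_apply
    contDiffAt_const).differentiableAt (by norm_num)

lemma pd_pd_eq (hU : IsOpen U) (hV : ContDiffOn ℝ (⊤ : ℕ∞) V U) (hq : q ∈ U) (v w : E) :
    pd (pd V v) w q = fderiv ℝ (fderiv ℝ V) q w v := by
  have hD1 := contDiffOn_fderiv hU hV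
  have hev : pd V v =ᶠ[𝓝 q] fun q' => fderiv ℝ V q' v := by
    filter_upwards [hU.mem_nhds hq] with y hy
    exact pd_eq_fderiv hU hV hy v
  rw [pd, hev.lineDeriv_eq, (diffAt_fderiv_apply hU hV hq v).lineDeriv_eq_fderiv,
    fderiv_clm_apply ((hD1.contDiffAt (hU.mem_nhds hq)).differentiableAt (by norm_num))
      (differentiableAt_const v)]
  simp

lemma symm2 (hU : IsOpen U) (hV : ContDiffOn ℝ (⊤ : ℕ∞) V U) (hq : q ∈ U) (v w : E) :
    fderiv ℝ (fderiv ℝ V) q v w = fderiv ℝ (fderiv ℝ V) q w v :=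
  (((smooth3 hV).contDiffAt (hU.mem_nhds hq)).isSymmSndFDerivAt (by norm_num)) v w

lemma fderiv_eval2 (hU : IsOpen U) (hV : ContDiffOn ℝ (⊤ : ℕ∞) V U) (hq : q ∈ U) (w v u : E) :
    fderiv ℝ (fun q' => fderiv ℝ (fderiv ℝ V) q' w v) q u
      = fderiv ℝ (fderiv ℝ (fderiv ℝ V)) q u w v := by
  have hD2 := contDiffOn_fderiv2 hU hV
  have hc2 : DifferentiableAt ℝ (fun q' => fderiv ℝ (fderiv ℝ V) q' w) q :=
    ((hD2.contDiffAt (hU.mem_nhds hq)).clm_apply contDiffAt_const).differentiableAt (by norm_num)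
  have h1 : fderiv ℝ (fun q' => fderiv ℝ (fderiv ℝ V) q' w v) q
      = (fderiv ℝ (fun q' => fderiv ℝ (fderiv ℝ V) q' w) q).flip v := by
    rw [fderiv_clm_apply hc2 (differentiableAt_const v)]
    simp
  have h2 : fderiv ℝ (fun q' => fderiv ℝ (fderiv ℝ V) q' w) q
      = (fderiv ℝ (fderiv ℝ (fderiv ℝ V)) q).flip w := by
    rw [fderiv_clm_apply ((hD2.contDiffAt (hU.mem_nhds hq)).differentiableAt (by norm_num))
      (differentiableAt_const w)]
    simp
  rw [h1, h2]
  rfl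

lemma pd3_eq (hU : IsOpen U) (hV : ContDiffOn ℝ (⊤ : ℕ∞) V U) (hq : q ∈ U) (v w u : E) :
    pd (pd (pd V v) w) u q = fderiv ℝ (fderiv ℝ (fderiv ℝ V)) q u w v := by
  have hD2 := contDiffOn_fderiv2 hU hV
  have hev : pd (pd V v) w =ᶠ[𝓝 q] fun q' => fderiv ℝ (fderiv ℝ V) q' w v := by
    filter_upwards [hU.mem_nhds hq] with y hy
    exact pd_pd_eq hU hV hy v w
  have hdiff : DifferentiableAt ℝ (fun q' => fderiv ℝ (fderiv ℝ V) q' w v) q :=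
    (((hD2.contDiffAt (hU.mem_nhds hq)).clm_apply contDiffAt_const).clm_apply
      contDiffAt_const).differentiableAt (by norm_num)
  rw [pd, hev.lineDeriv_eq, hdiff.lineDeriv_eq_fderiv, fderiv_eval2 hU hV hq]

lemma symm3a (hU : IsOpen U) (hV : ContDiffOn ℝ (⊤ : ℕ∞) V U) (hq : q ∈ U) (u w : E) :
    fderiv ℝ (fderiv ℝ (fderiv ℝ V)) q u w = fderiv ℝ (fderiv ℝ (fderiv ℝ V)) q w u :=
  (((contDiffOn_fderiv hU hV).contDiffAt (hU.mem_nhds hq)).isSymmSndFDerivAt (by norm_num)) u w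

lemma symm3b (hU : IsOpen U) (hV : ContDiffOn ℝ (⊤ : ℕ∞) V U) (hq : q ∈ U) (u w v : E) :
    fderiv ℝ (fderiv ℝ (fderiv ℝ V)) q u w v = fderiv ℝ (fderiv ℝ (fderiv ℝ V)) q u v w := by
  have hev : (fun q' => fderiv ℝ (fderiv ℝ V) q' w v)
      =ᶠ[𝓝 q] fun q' => fderiv ℝ (fderiv ℝ V) q' v w := by
    filter_upwards [hU.mem_nhds hq] with y hy
    exact symm2 hU hV hy w v
  rw [← fderiv_eval2 hU hV hq, hev.fderiv_eq, fderiv_eval2 hU hV hq]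

end machinery

/-- Classification of the static potentials of the spatial Birmingham–Kottler metric
`g = f(r)⁻¹dr² + r²((dx¹)² + ⋯ + (dx^{n−1})²)` with flat (`k = 0`) conformal infinity and
coordinate mass `m ≠ 0`: a smooth `V` on `I × ℝ^{n−1}` satisfies the static KID system
(i)–(iii) iff `V(r,x) = c̃ √(f(r))` for some constant `c̃`. -/
theorem static_KID_classification_BK_toroidal (n : ℕ) (hn : 3 ≤ n) (m : ℝ) (hm : m ≠ 0)
    (I : Set ℝ) (hIopen : IsOpen I) (hIconn : IsPreconnected I) (hIne : I.Nonempty)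
    (hIpos : I ⊆ Set.Ioi (0 : ℝ)) (hfpos : ∀ r ∈ I, 0 < fBK n m r)
    (V : ℝ × (Fin (n - 1) → ℝ) → ℝ)
    (hV : ContDiffOn ℝ (⊤ : ℕ∞) V (I ×ˢ (Set.univ : Set (Fin (n - 1) → ℝ)))) :
    ((∀ r ∈ I, ∀ x : Fin (n - 1) → ℝ,
        (pd (pd V (dirR (n - 1))) (dirR (n - 1)) (r, x)
            + (deriv (fBK n m) r / (2 * fBK n m r)) * pd V (dirR (n - 1)) (r, x)
            - (deriv (deriv (fBK n m)) r / (2 * fBK n m r)) * V (r, x) = 0) ∧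
        (∀ A : Fin (n - 1),
          pd (pd V (dirX (n - 1) A)) (dirR (n - 1)) (r, x)
            - (1 / r) * pd V (dirX (n - 1) A) (r, x) = 0) ∧
        (∀ A B : Fin (n - 1),
          pd (pd V (dirX (n - 1) B)) (dirX (n - 1) A) (r, x)
            + (if A = B then (1 : ℝ) else 0) * r *
              (fBK n m r * pd V (dirR (n - 1)) (r, x)
                - (deriv (fBK n m) r / 2) * V (r, x)) = 0))
      ↔
      ∃ ct : ℝ, ∀ r ∈ I, ∀ x : Fin (n - 1) → ℝ,
        V (r, x) = ct * Real.sqrt (fBK n m r)) := by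
  have hUopen : IsOpen (I ×ˢ (Set.univ : Set (Fin (n - 1) → ℝ))) :=
    hIopen.prod isOpen_univ
  have hmemU : ∀ {r : ℝ} {x : Fin (n - 1) → ℝ}, r ∈ I →
      (r, x) ∈ I ×ˢ (Set.univ : Set (Fin (n - 1) → ℝ)) := fun hr => ⟨hr, trivial⟩
  constructor
  · -- forward direction
    intro h
    -- Step 1: all angular derivatives vanish
    have hA0 : ∀ r ∈ I, ∀ x : Fin (n - 1) → ℝ, ∀ A : Fin (n - 1),
        pd V (dirX (n - 1) A) (r, x) = 0 := by
      intro r hr x A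
      have hr0 : 0 < r := hIpos hr
      set uA : ℝ → ℝ := fun s => pd V (dirX (n - 1) A) (s, x) with huA
      -- (ii) in one-variable form
      have hii : ∀ s ∈ I, deriv uA s = (1 / s) * uA s := by
        intro s hs
        have h2 := (h s hs x).2.1 A
        rw [pd_fst (pd V (dirX (n - 1) A)) s x] at h2
        linarith
      -- differentiability of uA at r
      have hline : DifferentiableAt ℝ (fun s : ℝ => ((s, x) : ℝ × (Fin (n - 1) → ℝ))) r :=
        differentiableAt_id.prodMk (differentiableAt_const x)
      have huAd : DifferentiableAt ℝ uA r := by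
        have hev : uA =ᶠ[𝓝 r] fun s => fderiv ℝ V (s, x) (dirX (n - 1) A) := by
          filter_upwards [hIopen.mem_nhds hr] with s hs
          exact pd_eq_fderiv hUopen hV (hmemU hs) _
        rw [hev.differentiableAt_iff]
        exact (diffAt_fderiv_apply hUopen hV (hmemU hr) (dirX (n - 1) A)).comp r hline
      have hduA : deriv uA r = (1 / r) * uA r := hii r hr
      -- second derivative of uA vanishes
      have hdd : deriv (deriv uA) r = 0 := by
        have hev : deriv uA =ᶠ[𝓝 r] fun s => (1 / s) * uA s := by
          filter_upwards [hIopen.mem_nhds hr] with s hs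
          exact hii s hs
        rw [hev.deriv_eq]
        have h1 : HasDerivAt (fun s : ℝ => 1 / s) (-(r ^ 2)⁻¹) r := by
          simpa [one_div] using hasDerivAt_inv hr0.ne'
        have h3 := h1.mul huAd.hasDerivAt
        rw [show (fun s => 1 / s * uA s) = (fun s : ℝ => 1 / s) * uA from rfl, h3.deriv, hduA]
        field_simp
        ring
      -- differentiate equation (i) in the angular direction
      set e : Fin (n - 1) → ℝ := Pi.single A 1 with he
      have hlin2 : DifferentiableAt ℝ
          (fun t : ℝ => ((r, x + t • e) : ℝ × (Fin (n - 1) → ℝ))) 0 :=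
        (differentiableAt_const r).prodMk
          ((differentiableAt_const x).add (differentiableAt_id.smul_const e))
      have hl0 : ((r, x + (0 : ℝ) • e) : ℝ × (Fin (n - 1) → ℝ)) = (r, x) := by simp
      have hRd : DifferentiableAt ℝ (fun t : ℝ => V (r, x + t • e)) 0 := by
        have hVd : DifferentiableAt ℝ V (r, x + (0 : ℝ) • e) := by
          rw [hl0]
          exact ((smooth3 hV).contDiffAt (hUopen.mem_nhds (hmemU hr))).differentiableAt
            (by norm_num)
        exact hVd.comp 0 hlin2
      have hQd : DifferentiableAt ℝ (fun t : ℝ => pd V (dirR (n - 1)) (r, x + t • e)) 0 := by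
        have hfun : (fun t : ℝ => pd V (dirR (n - 1)) (r, x + t • e))
            = fun t : ℝ => fderiv ℝ V (r, x + t • e) (dirR (n - 1)) :=
          funext fun t => pd_eq_fderiv hUopen hV (hmemU hr) _
        rw [hfun]
        have houter : DifferentiableAt ℝ (fun q => fderiv ℝ V q (dirR (n - 1)))
            (r, x + (0 : ℝ) • e) := by
          rw [hl0]
          exact diffAt_fderiv_apply hUopen hV (hmemU hr) _
        exact houter.comp 0 hlin2
      set c1 : ℝ := deriv (fBK n m) r / (2 * fBK n m r) with hc1
      set c2 : ℝ := deriv (deriv (fBK n m)) r / (2 * fBK n m r) with hc2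
      have hPQ : (fun t : ℝ => pd (pd V (dirR (n - 1))) (dirR (n - 1)) (r, x + t • e))
          = fun t : ℝ => c2 * V (r, x + t • e) - c1 * pd V (dirR (n - 1)) (r, x + t • e) := by
        funext t
        have h1 := (h r hr (x + t • e)).1
        linarith
      have hP : pd (pd (pd V (dirR (n - 1))) (dirR (n - 1))) (dirX (n - 1) A) (r, x)
          = c2 * pd V (dirX (n - 1) A) (r, x)
            - c1 * pd (pd V (dirR (n - 1))) (dirX (n - 1) A) (r, x) := by
        rw [pd_snd, pd_snd, pd_snd, ← he, hPQ]
        exact ((hRd.hasDerivAt.const_mul c2).sub (hQd.hasDerivAt.const_mul c1)).deriv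
      -- symmetry rewriting
      have hq : (r, x) ∈ I ×ˢ (Set.univ : Set (Fin (n - 1) → ℝ)) := hmemU hr
      have hsym1 : pd (pd V (dirR (n - 1))) (dirX (n - 1) A) (r, x) = deriv uA r := by
        rw [pd_pd_eq hUopen hV hq (dirR (n - 1)) (dirX (n - 1) A),
          symm2 hUopen hV hq (dirX (n - 1) A) (dirR (n - 1)),
          ← pd_pd_eq hUopen hV hq (dirX (n - 1) A) (dirR (n - 1)),
          pd_fst]
      have hsym2 : pd (pd (pd V (dirR (n - 1))) (dirR (n - 1))) (dirX (n - 1) A) (r, x)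
          = deriv (deriv uA) r := by
        rw [pd3_eq hUopen hV hq (dirR (n - 1)) (dirR (n - 1)) (dirX (n - 1) A),
          symm3a hUopen hV hq (dirX (n - 1) A) (dirR (n - 1)),
          symm3b hUopen hV hq (dirR (n - 1)) (dirX (n - 1) A) (dirR (n - 1)),
          ← pd3_eq hUopen hV hq (dirX (n - 1) A) (dirR (n - 1)) (dirR (n - 1)),
          pd_fst]
        have hfs : (fun s => pd (pd V (dirX (n - 1) A)) (dirR (n - 1)) (s, x)) = deriv uA :=
          funext fun s => pd_fst (pd V (dirX (n - 1) A)) s x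
        rw [hfs]
      -- combine
      rw [hsym1, hsym2, hdd, hduA] at hP
      -- hP : 0 = c2 * uA r - c1 * ((1/r) * uA r)
      have hfr : fBK n m r ≠ 0 := (hfpos r hr).ne'
      rw [hc1, hc2, deriv_fBK n m hr0, deriv_deriv_fBK n m hr0] at hP
      have hkey := key_nonzero n hn m hm hr0
      have hux : pd V (dirX (n - 1) A) (r, x) = uA r := rfl
      rw [hux] at hP
      have h2 : 2 * fBK n m r * (uA r * (r * fBK2 n m r - fBK1 n m r)) = 0 := by
        field_simp at hP
        linear_combination (-2 * fBK n m r) * hP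
      have hzero : uA r * (r * fBK2 n m r - fBK1 n m r) = 0 := by
        rcases mul_eq_zero.1 h2 with h' | h'
        · exfalso
          have : fBK n m r = 0 := by linarith
          exact hfr this
        · exact h'
      have : uA r = 0 := by
        rcases mul_eq_zero.1 hzero with h' | h'
        · exact h'
        · exfalso; apply hkey; linarith
      exact this
    -- Step 2: V is independent of x
    have hVx : ∀ r ∈ I, ∀ x : Fin (n - 1) → ℝ, V (r, x) = V (r, 0) := by
      intro r hr x
      have hg : Differentiable ℝ (fun y : Fin (n - 1) → ℝ => V (r, y)) := by
        intro y
        have hVd : DifferentiableAt ℝ V (r, y) :=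
          ((smooth3 hV).contDiffAt (hUopen.mem_nhds (hmemU hr))).differentiableAt (by norm_num)
        exact hVd.comp y ((differentiableAt_const r).prodMk differentiableAt_id)
      have hg' : ∀ y : Fin (n - 1) → ℝ, fderiv ℝ (fun y => V (r, y)) y = 0 := by
        intro y
        have hVd : DifferentiableAt ℝ V (r, y) :=
          ((smooth3 hV).contDiffAt (hUopen.mem_nhds (hmemU hr))).differentiableAt (by norm_num)
        have hcomp : fderiv ℝ (fun y : Fin (n - 1) → ℝ => V (r, y)) y
            = (fderiv ℝ V (r, y)).comp (ContinuousLinearMap.inr ℝ ℝ (Fin (n - 1) → ℝ)) := by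
          have : (fun y : Fin (n - 1) → ℝ => V (r, y)) = V ∘ (fun y => (r, y)) := rfl
          rw [this, fderiv_comp y hVd
            ((differentiableAt_const r).prodMk differentiableAt_id)]
          congr 1
          exact (hasFDerivAt_prodMk_right r y).fderiv
        rw [hcomp]
        ext z
        simp only [ContinuousLinearMap.coe_comp', Function.comp_apply,
          ContinuousLinearMap.inr_apply, ContinuousLinearMap.zero_apply]
        have hz : ((0 : ℝ), z) = ∑ A : Fin (n - 1), z A • dirX (n - 1) A := by
          apply Prod.ext
          · rw [Prod.fst_sum]
            simp [dirX]
          · rw [Prod.snd_sum]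
            simp only [dirX, Prod.smul_mk, smul_zero]
            have hsingle : ∀ A : Fin (n - 1),
                z A • (Pi.single A 1 : Fin (n - 1) → ℝ) = Pi.single A (z A) := by
              intro A
              rw [← Pi.single_smul, smul_eq_mul, mul_one]
            rw [Finset.sum_congr rfl fun A _ => hsingle A]
            exact (Finset.univ_sum_single z).symm
        rw [hz, map_sum]
        apply Finset.sum_eq_zero
        intro A _
        rw [map_smul]
        have h0 : fderiv ℝ V (r, y) (dirX (n - 1) A) = 0 := by
          rw [← pd_eq_fderiv hUopen hV (hmemU hr)]
          exact hA0 r hr y A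
        simp [h0]
      exact is_const_of_fderiv_eq_zero hg hg' x 0
    -- Step 3: radial ODE from (iii)
    have hd : 0 < n - 1 := by omega
    set A0 : Fin (n - 1) := ⟨0, hd⟩ with hA0def
    have hODE : ∀ r ∈ I,
        fBK n m r * deriv (fun s => V (s, 0)) r = (fBK1 n m r / 2) * V (r, 0) := by
      intro r hr
      have hr0 : 0 < r := hIpos hr
      have h3 := (h r hr 0).2.2 A0 A0
      rw [if_pos rfl] at h3
      have hz : pd (pd V (dirX (n - 1) A0)) (dirX (n - 1) A0) (r, (0 : Fin (n - 1) → ℝ)) = 0 := by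
        rw [pd_snd]
        have hfun : (fun t : ℝ =>
            pd V (dirX (n - 1) A0)
              (r, (0 : Fin (n - 1) → ℝ) + t • (Pi.single A0 1 : Fin (n - 1) → ℝ)))
            = fun _ => (0 : ℝ) := funext fun t => hA0 r hr _ _
        rw [hfun, deriv_const]
      rw [hz, pd_fst, deriv_fBK n m hr0] at h3
      have hr' : r ≠ 0 := hr0.ne'
      have h5 : r * (fBK n m r * deriv (fun s => V (s, 0)) r
          - fBK1 n m r / 2 * V (r, 0)) = 0 := by linear_combination h3
      have h4 := (mul_eq_zero.1 h5).resolve_left hr'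
      linarith
    -- Step 4: constancy of V/√f
    have hψd : ∀ r ∈ I, DifferentiableAt ℝ (fun s => V (s, 0)) r := by
      intro r hr
      have hVd : DifferentiableAt ℝ V (r, (0 : Fin (n - 1) → ℝ)) :=
        ((smooth3 hV).contDiffAt (hUopen.mem_nhds (hmemU hr))).differentiableAt (by norm_num)
      exact hVd.comp r (differentiableAt_id.prodMk (differentiableAt_const 0))
    set φ : ℝ → ℝ := fun s => V (s, 0) / Real.sqrt (fBK n m s) with hφdef
    have hφ : ∀ r ∈ I, HasDerivAt φ 0 r := by
      intro r hr
      have hr0 : 0 < r := hIpos hr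
      have hfr : 0 < fBK n m r := hfpos r hr
      have hq : 0 < Real.sqrt (fBK n m r) := Real.sqrt_pos.2 hfr
      have hsq : HasDerivAt (fun s => Real.sqrt (fBK n m s))
          (fBK1 n m r / (2 * Real.sqrt (fBK n m r))) r :=
        (hasDerivAt_fBK n m hr0.ne').sqrt hfr.ne'
      have hψ : HasDerivAt (fun s => V (s, 0)) (deriv (fun s => V (s, 0)) r) r :=
        (hψd r hr).hasDerivAt
      have hdiv := hψ.div hsq hq.ne'
      refine hdiv.congr_deriv (Eq.symm ?_)
      have hq2 : Real.sqrt (fBK n m r) ^ 2 = fBK n m r := Real.sq_sqrt hfr.le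
      have hODEr := hODE r hr
      symm
      rw [div_eq_zero_iff]
      left
      have h' : 2 * Real.sqrt (fBK n m r) ^ 2 * deriv (fun s => V (s, 0)) r
          - fBK1 n m r * V (r, 0) = 0 := by
        rw [hq2]; linarith [hODEr]
      field_simp
      linear_combination h'
    obtain ⟨r₀, hr₀⟩ := hIne
    refine ⟨V (r₀, 0) / Real.sqrt (fBK n m r₀), ?_⟩
    intro r hr x
    have hconv : Convex ℝ I := hIconn.ordConnected.convex
    have hφconst : φ r = φ r₀ := by
      apply hconv.is_const_of_fderivWithin_eq_zero (𝕜 := ℝ) (f := φ)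
      · intro s hs
        exact ((hφ s hs).differentiableAt).differentiableWithinAt
      · intro s hs
        have := ((hφ s hs).hasFDerivAt).hasFDerivWithinAt.fderivWithin
          (hIopen.uniqueDiffWithinAt hs)
        rw [this]
        ext
        simp
      · exact hr
      · exact hr₀
    have hqr : Real.sqrt (fBK n m r) ≠ 0 := (Real.sqrt_pos.2 (hfpos r hr)).ne'
    rw [hVx r hr x]
    have : V (r, 0) = φ r * Real.sqrt (fBK n m r) := by
      rw [hφdef]
      field_simp
    rw [this, hφconst]
  · -- reverse direction
    rintro ⟨ct, hct⟩
    intro r hr x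
    have hr0 : 0 < r := hIpos hr
    have hfr : 0 < fBK n m r := hfpos r hr
    have hq : 0 < Real.sqrt (fBK n m r) := Real.sqrt_pos.2 hfr
    set S : ℝ → ℝ := fun s => ct * Real.sqrt (fBK n m s) with hS
    set T : ℝ → ℝ := fun s => ct * (fBK1 n m s / (2 * Real.sqrt (fBK n m s))) with hT
    -- angular derivatives vanish
    have hax : ∀ s ∈ I, ∀ y : Fin (n - 1) → ℝ, ∀ A : Fin (n - 1),
        pd V (dirX (n - 1) A) (s, y) = 0 := by
      intro s hs y A
      rw [pd_snd]
      have hfun : (fun t : ℝ => V (s, y + t • (Pi.single A 1 : Fin (n - 1) → ℝ)))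
          = fun _ => S s := funext fun t => hct s hs _
      rw [hfun, deriv_const]
    -- radial derivative
    have har : ∀ s ∈ I, ∀ y : Fin (n - 1) → ℝ, pd V (dirR (n - 1)) (s, y) = T s := by
      intro s hs y
      rw [pd_fst]
      have hev : (fun s' => V (s', y)) =ᶠ[𝓝 s] S := by
        filter_upwards [hIopen.mem_nhds hs] with s' hs'
        exact hct s' hs' y
      rw [hev.deriv_eq]
      have hsq : HasDerivAt S (T s) s := by
        have := ((hasDerivAt_fBK n m (hIpos hs).ne').sqrt (hfpos s hs).ne').const_mul ct
        exact this
      exact hsq.deriv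
    refine ⟨?_, ?_, ?_⟩
    · -- equation (i)
      have h1 : pd (pd V (dirR (n - 1))) (dirR (n - 1)) (r, x) = deriv T r := by
        rw [pd_fst]
        have hev : (fun s => pd V (dirR (n - 1)) (s, x)) =ᶠ[𝓝 r] T := by
          filter_upwards [hIopen.mem_nhds hr] with s hs
          exact har s hs x
        exact hev.deriv_eq
      have hsq : HasDerivAt (fun s => Real.sqrt (fBK n m s))
          (fBK1 n m r / (2 * Real.sqrt (fBK n m r))) r :=
        (hasDerivAt_fBK n m hr0.ne').sqrt hfr.ne'
      have hTd : HasDerivAt T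
          (ct * ((fBK2 n m r * (2 * Real.sqrt (fBK n m r))
            - fBK1 n m r * (2 * (fBK1 n m r / (2 * Real.sqrt (fBK n m r)))))
              / (2 * Real.sqrt (fBK n m r)) ^ 2)) r := by
        have hden : HasDerivAt (fun s => 2 * Real.sqrt (fBK n m s))
            (2 * (fBK1 n m r / (2 * Real.sqrt (fBK n m r)))) r := hsq.const_mul 2
        have hdne : 2 * Real.sqrt (fBK n m r) ≠ 0 := by positivity
        exact ((hasDerivAt_fBK1 n m hr0.ne').div hden hdne).const_mul ct
      rw [h1, hTd.deriv, har r hr x, hct r hr x, deriv_fBK n m hr0, deriv_deriv_fBK n m hr0]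
      rw [hT]
      set q : ℝ := Real.sqrt (fBK n m r) with hqdef
      have hq2 : q ^ 2 = fBK n m r := Real.sq_sqrt hfr.le
      rw [← hq2]
      have hqne : q ≠ 0 := hq.ne'
      field_simp
      ring
    · -- equation (ii)
      intro A
      have h1 : pd (pd V (dirX (n - 1) A)) (dirR (n - 1)) (r, x) = 0 := by
        rw [pd_fst]
        have hev : (fun s => pd V (dirX (n - 1) A) (s, x)) =ᶠ[𝓝 r] fun _ => 0 := by
          filter_upwards [hIopen.mem_nhds hr] with s hs
          exact hax s hs x A
        rw [hev.deriv_eq, deriv_const]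
      rw [h1, hax r hr x A]
      ring
    · -- equation (iii)
      intro A B
      have h1 : pd (pd V (dirX (n - 1) B)) (dirX (n - 1) A) (r, x) = 0 := by
        rw [pd_snd]
        have hfun : (fun t : ℝ =>
            pd V (dirX (n - 1) B) (r, x + t • (Pi.single A 1 : Fin (n - 1) → ℝ)))
            = fun _ => (0 : ℝ) := funext fun t => hax r hr _ B
        rw [hfun, deriv_const]
      have h2 : fBK n m r * pd V (dirR (n - 1)) (r, x)
          - deriv (fBK n m) r / 2 * V (r, x) = 0 := by
        rw [har r hr x, hct r hr x, deriv_fBK n m hr0, hT]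
        set q : ℝ := Real.sqrt (fBK n m r) with hqdef
        have hq2 : q ^ 2 = fBK n m r := Real.sq_sqrt hfr.le
        rw [← hq2]
        have hqne : q ≠ 0 := hq.ne'
        field_simp
        ring
      rw [h1, h2]
      ring
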